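/- For every real μ with μ > γ, both K(μ) = μ²M + μC + K and 2μM + C are positive definite Hermitian matrices. -/

import Mathlib

open Matrix
open scoped ComplexOrder

noncomputable section

/-- The value `x* P x` (which is real for Hermitian `P`), taken as its real part. -/
def qf {n : ℕ} (P : Matrix (Fin n) (Fin n) ℂ) (x : Fin n → ℂ) : ℝ :=
  (star x ⬝ᵥ P.mulVec x).re

/-- The (positive semidefinite) square root of a positive semidefinite matrix,
extended by `0` to all matrices. -/
def msqrt {n : ℕ} (P : Matrix (Fin n) (Fin n) ℂ) : Matrix (Fin n) (Fin n) ℂ :=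
  open scoped Classical in
  if h : P.PosSemidef then
    (h.1.eigenvectorUnitary : Matrix (Fin n) (Fin n) ℂ) *
      diagonal ((↑) ∘ Real.sqrt ∘ h.1.eigenvalues) *
      (star h.1.eigenvectorUnitary : Matrix (Fin n) (Fin n) ℂ)
  else 0

/-- The quadratic matrix pencil `K(λ) = λ²M + λC + K`. -/
def Kpen {n : ℕ} (M C K : Matrix (Fin n) (Fin n) ℂ) (lam : ℂ) :
    Matrix (Fin n) (Fin n) ℂ :=
  lam ^ 2 • M + lam • C + K

/-- The real part of the `+`-root of the scalar quadratic
`m(x) λ² + c(x) λ + k(x) = 0`. -/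
def rfun {n : ℕ} (M C K : Matrix (Fin n) (Fin n) ℂ) (x : Fin n → ℂ) : ℝ :=
  open scoped Classical in
  if (qf C x) ^ 2 ≥ 4 * qf M x * qf K x then
    (-(qf C x) + Real.sqrt ((qf C x) ^ 2 - 4 * qf M x * qf K x)) / (2 * qf M x)
  else
    -(qf C x) / (2 * qf M x)

/-- The spectral-shift bound `γ = sup_{x ≠ 0} Re p₊(x)`. -/
def gam {n : ℕ} (M C K : Matrix (Fin n) (Fin n) ℂ) : ℝ :=
  sSup {y : ℝ | ∃ x : Fin n → ℂ, x ≠ 0 ∧ rfun M C K x = y}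

/-- The phase-space matrix `A = [[0, K½ M⁻½], [−M⁻½ K½, −M⁻½ C M⁻½]]`. -/
def phaseA {n : ℕ} (M C K : Matrix (Fin n) (Fin n) ℂ) :
    Matrix (Fin n ⊕ Fin n) (Fin n ⊕ Fin n) ℂ :=
  fromBlocks 0 (msqrt K * (msqrt M)⁻¹)
    (-((msqrt M)⁻¹ * msqrt K)) (-((msqrt M)⁻¹ * C * (msqrt M)⁻¹))

/-- The operator norm of a matrix with respect to the Euclidean norm. -/
def opNorm {m : Type*} [Fintype m] [DecidableEq m] (A : Matrix m m ℂ) : ℝ :=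
  ‖toEuclideanCLM (𝕜 := ℂ) A‖

/-- The block matrix `L(μ) = [[K½ K(μ)⁻½, 0], [μ M½ K(μ)⁻½, I]]`. -/
def Lmat {n : ℕ} (M C K : Matrix (Fin n) (Fin n) ℂ) (mu : ℝ) :
    Matrix (Fin n ⊕ Fin n) (Fin n ⊕ Fin n) ℂ :=
  fromBlocks (msqrt K * (msqrt (Kpen M C K (mu : ℂ)))⁻¹) 0
    ((mu : ℂ) • (msqrt M * (msqrt (Kpen M C K (mu : ℂ)))⁻¹)) 1


lemma herm_dot {n : ℕ} {A : Matrix (Fin n) (Fin n) ℂ} (hA : A.IsHermitian)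
    (x : Fin n → ℂ) : star x ⬝ᵥ A *ᵥ x = ((qf A x : ℝ) : ℂ) := by
  have h : star (star x ⬝ᵥ A *ᵥ x) = star x ⬝ᵥ A *ᵥ x := by
    calc star (star x ⬝ᵥ A *ᵥ x) = star (A *ᵥ x) ⬝ᵥ x := by
          rw [star_dotProduct]; simp
      _ = (star x ᵥ* Aᴴ) ⬝ᵥ x := by rw [star_mulVec]
      _ = star x ⬝ᵥ A *ᵥ x := by rw [hA.eq, ← dotProduct_mulVec]
  exact (Complex.conj_eq_iff_re.mp h).symm

lemma posDef_of_qf {n : ℕ} {A : Matrix (Fin n) (Fin n) ℂ} (hA : A.IsHermitian)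
    (h : ∀ x : Fin n → ℂ, x ≠ 0 → 0 < qf A x) : A.PosDef := by
  refine PosDef.of_dotProduct_mulVec_pos hA fun x hx => ?_
  rw [herm_dot hA x]
  exact_mod_cast h x hx

lemma qf_Kpen' {n : ℕ} (M C K : Matrix (Fin n) (Fin n) ℂ) (mu : ℝ) (x : Fin n → ℂ) :
    qf (Kpen M C K (mu : ℂ)) x = mu ^ 2 * qf M x + mu * qf C x + qf K x := by
  have h2 : ((mu : ℂ)) ^ 2 = ((mu ^ 2 : ℝ) : ℂ) := by push_cast; ring
  simp only [Kpen, qf, add_mulVec, smul_mulVec, dotProduct_add, dotProduct_smul,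
    smul_eq_mul, h2, Complex.add_re, Complex.re_ofReal_mul]

lemma qf_shift {n : ℕ} (M C : Matrix (Fin n) (Fin n) ℂ) (mu : ℝ) (x : Fin n → ℂ) :
    qf (((2 * mu : ℝ) : ℂ) • M + C) x = 2 * mu * qf M x + qf C x := by
  simp only [qf, add_mulVec, smul_mulVec, dotProduct_add, dotProduct_smul,
    smul_eq_mul, Complex.add_re, Complex.re_ofReal_mul]
  try ring

lemma herm_real_smul {n : ℕ} {A : Matrix (Fin n) (Fin n) ℂ} (hA : A.IsHermitian)
    (r : ℝ) : ((r : ℂ) • A).IsHermitian := by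
  unfold Matrix.IsHermitian
  rw [conjTranspose_smul, hA.eq]
  congr 1
  simp [Complex.ext_iff]

lemma herm_Kpen' {n : ℕ} {M C K : Matrix (Fin n) (Fin n) ℂ}
    (hM : M.IsHermitian) (hC : C.IsHermitian) (hK : K.IsHermitian) (mu : ℝ) :
    (Kpen M C K (mu : ℂ)).IsHermitian := by
  have h2 : ((mu : ℂ)) ^ 2 = ((mu ^ 2 : ℝ) : ℂ) := by push_cast; ring
  unfold Kpen
  rw [h2]
  exact ((herm_real_smul hM _).add (herm_real_smul hC _)).add hK

lemma qf_pos {n : ℕ} {A : Matrix (Fin n) (Fin n) ℂ} (hA : A.PosDef)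
    {x : Fin n → ℂ} (hx : x ≠ 0) : 0 < qf A x := by
  simpa [qf, RCLike.re_to_complex] using hA.re_dotProduct_pos hx

lemma rfun_nonpos {n : ℕ} {M C K : Matrix (Fin n) (Fin n) ℂ}
    (hM : M.PosDef) (hC : C.PosDef) (hK : K.PosDef)
    {x : Fin n → ℂ} (hx : x ≠ 0) : rfun M C K x ≤ 0 := by
  have hm := qf_pos hM hx
  have hc := qf_pos hC hx
  have hk := qf_pos hK hx
  rw [rfun]
  split_ifs with hd
  · apply div_nonpos_of_nonpos_of_nonneg
    · have hle : Real.sqrt ((qf C x) ^ 2 - 4 * qf M x * qf K x) ≤ qf C x := by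
        have h := Real.sqrt_le_sqrt
          (show (qf C x) ^ 2 - 4 * qf M x * qf K x ≤ (qf C x) ^ 2 by nlinarith)
        rwa [Real.sqrt_sq hc.le] at h
      linarith
    · positivity
  · apply div_nonpos_of_nonpos_of_nonneg
    · linarith
    · positivity

/-- For every real `μ > γ`, both `K(μ)` and `2μM + C` are positive definite. -/
theorem posDef_of_gt_gamma {n : ℕ} (hn : 1 ≤ n)
    (M C K : Matrix (Fin n) (Fin n) ℂ)
    (hM : M.PosDef) (hC : C.PosDef) (hK : K.PosDef) :
    ∀ mu : ℝ, gam M C K < mu →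
      (Kpen M C K (mu : ℂ)).PosDef ∧ (((2 * mu : ℝ) : ℂ) • M + C).PosDef := by
  intro mu hmu
  have hb : BddAbove {y : ℝ | ∃ x : Fin n → ℂ, x ≠ 0 ∧ rfun M C K x = y} := by
    refine ⟨0, fun y hy => ?_⟩
    obtain ⟨x, hx, rfl⟩ := hy
    exact rfun_nonpos hM hC hK hx
  have key : ∀ x : Fin n → ℂ, x ≠ 0 →
      0 < mu ^ 2 * qf M x + mu * qf C x + qf K x ∧ 0 < 2 * mu * qf M x + qf C x := by
    intro x hx
    have hm := qf_pos hM hx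
    have hc := qf_pos hC hx
    have hk := qf_pos hK hx
    have hlt : rfun M C K x < mu :=
      lt_of_le_of_lt (le_csSup hb ⟨x, hx, rfl⟩) hmu
    rw [rfun] at hlt
    split_ifs at hlt with hd
    · set s := Real.sqrt ((qf C x) ^ 2 - 4 * qf M x * qf K x) with hs
      have hs0 : 0 ≤ s := Real.sqrt_nonneg _
      have hsq : s ^ 2 = (qf C x) ^ 2 - 4 * qf M x * qf K x :=
        Real.sq_sqrt (by linarith)
      have h1 : -(qf C x) + s < mu * (2 * qf M x) :=
        (div_lt_iff₀ (by positivity)).mp hlt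
      constructor
      · nlinarith
      · linarith
    · have h1 : -(qf C x) < mu * (2 * qf M x) :=
        (div_lt_iff₀ (by positivity)).mp hlt
      push_neg at hd
      constructor
      · nlinarith [sq_nonneg (2 * qf M x * mu + qf C x)]
      · linarith
  constructor
  · refine posDef_of_qf (herm_Kpen' hM.1 hC.1 hK.1 mu) fun x hx => ?_
    rw [qf_Kpen']
    exact (key x hx).1
  · refine posDef_of_qf (herm_real_smul hM.1 (2 * mu) |>.add hC.1) fun x hx => ?_
    rw [qf_shift]
    exact (key x hx).2


end
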